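/- arXiv:1709.07362 — 2 statements merged into one kernel-verified Lean document; each statement's English description precedes it below -/
import Mathlib

section
/- Let α ∈ (1,2) and τ > 0. Then ∫₀^τ x^{2-α}/(1+x²) dx - ∫_τ^∞ x^{-α}/(1+x²) dx = -π/(2 cos(πα/2)) - τ^{1-α}/(α-1). -/
open MeasureTheory Real

lemma l_beta (s : ℝ) (h0 : 0 < s) (h1 : s < 1) :
    ∫ t in Set.Ioo (0:ℝ) 1, t ^ (s - 1) * (1 - t) ^ (-s) = π / Real.sin (π * s) := by
  have hB : Complex.betaIntegral s (1 - s) = ↑π / Complex.sin (↑π * ↑s) := by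
    have h2 := Complex.Gamma_mul_Gamma_eq_betaIntegral
      (s := (s : ℂ)) (t := 1 - s) (by simpa using h0) (by simp [Complex.sub_re]; linarith)
    rw [add_sub_cancel, Complex.Gamma_one, one_mul] at h2
    rw [← h2, Complex.Gamma_mul_Gamma_one_sub]
  have hco : Complex.betaIntegral s (1 - s) =
      ((∫ x in (0:ℝ)..1, x ^ (s - 1) * (1 - x) ^ (-s) : ℝ) : ℂ) := by
    rw [Complex.betaIntegral, ← intervalIntegral.integral_ofReal]
    apply intervalIntegral.integral_congr
    intro x hx
    rw [Set.uIcc_of_le zero_le_one] at hx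
    push_cast [Complex.ofReal_cpow hx.1, Complex.ofReal_cpow (by linarith [hx.2] : (0:ℝ) ≤ 1 - x)]
    ring_nf
  have hsin : Real.sin (π * s) ≠ 0 :=
    ne_of_gt (Real.sin_pos_of_pos_of_lt_pi (by positivity)
      (by nlinarith [Real.pi_pos]))
  have : ((∫ x in (0:ℝ)..1, x ^ (s - 1) * (1 - x) ^ (-s) : ℝ) : ℂ) = ((π / Real.sin (π * s) : ℝ) : ℂ) := by
    rw [← hco, hB]
    push_cast [Complex.ofReal_sin]
    ring_nf
  have h3 : (∫ x in (0:ℝ)..1, x ^ (s - 1) * (1 - x) ^ (-s) : ℝ) = π / Real.sin (π * s) :=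
    Complex.ofReal_injective this
  rw [← h3, intervalIntegral.integral_of_le zero_le_one, integral_Ioc_eq_integral_Ioo]

lemma l_img : (fun y : ℝ => y / (1 + y)) '' Set.Ioi 0 = Set.Ioo 0 1 := by
  ext t
  constructor
  · rintro ⟨y, hy, rfl⟩
    simp only [Set.mem_Ioi] at hy
    have h1 : (0:ℝ) < 1 + y := by linarith
    refine ⟨by positivity, ?_⟩
    rw [div_lt_one h1]; linarith
  · rintro ⟨ht0, ht1⟩
    have h1 : (0:ℝ) < 1 - t := by linarith
    refine ⟨t / (1 - t), by simp only [Set.mem_Ioi]; positivity, ?_⟩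
    have h2 : 1 + t / (1 - t) = 1 / (1 - t) := by field_simp; ring
    show t / (1 - t) / (1 + t / (1 - t)) = t
    rw [h2]
    field_simp

lemma l_subst1 (s : ℝ) (h0 : 0 < s) (h1 : s < 1) :
    ∫ t in Set.Ioo (0:ℝ) 1, t ^ (s - 1) * (1 - t) ^ (-s) =
      ∫ y in Set.Ioi (0:ℝ), y ^ (s - 1) / (1 + y) := by
  rw [← l_img]
  rw [integral_image_eq_integral_abs_deriv_smul measurableSet_Ioi
    (f' := fun y => 1 / (1 + y) ^ 2) ?_ ?_]
  · apply setIntegral_congr_fun measurableSet_Ioi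
    intro y hy
    simp only [Set.mem_Ioi] at hy
    have h1y : (0:ℝ) < 1 + y := by linarith
    have e1 : 1 - y / (1 + y) = 1 / (1 + y) := by field_simp; ring
    simp only [smul_eq_mul]
    rw [e1, abs_of_pos (by positivity : (0:ℝ) < 1 / (1 + y) ^ 2)]
    rw [Real.div_rpow hy.le h1y.le, Real.div_rpow zero_le_one h1y.le,
      Real.one_rpow, Real.rpow_neg h1y.le]
    have hAB : (1 + y) ^ s = (1 + y) ^ (s - 1) * (1 + y) := by
      rw [← Real.rpow_add_one (by positivity : (1:ℝ) + y ≠ 0) (s - 1)]; ring_nf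
    have pA := Real.rpow_pos_of_pos h1y (s - 1)
    rw [hAB]
    field_simp
  · intro y hy
    simp only [Set.mem_Ioi] at hy
    have h1y : (1:ℝ) + y ≠ 0 := by positivity
    have := (hasDerivAt_id y).div ((hasDerivAt_const y 1).add (hasDerivAt_id y)) h1y
    simp only [one_mul, id_eq, zero_add, mul_one] at this
    have e : (1 + y - y) / (1 + y) ^ 2 = 1 / (1 + y) ^ 2 := by ring_nf
    simp only [Pi.add_apply, id_eq] at this; rw [e] at this
    exact this.hasDerivWithinAt
  · intro a ha b hb h
    simp only [Set.mem_Ioi] at ha hb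
    have h1a : (1:ℝ) + a ≠ 0 := by positivity
    have h1b : (1:ℝ) + b ≠ 0 := by positivity
    field_simp at h
    linarith

lemma l_val (s : ℝ) (h0 : 0 < s) (h1 : s < 1) :
    ∫ y in Set.Ioi (0:ℝ), y ^ (s - 1) / (1 + y) = π / Real.sin (π * s) := by
  rw [← l_subst1 s h0 h1]; exact l_beta s h0 h1

lemma l_key (α : ℝ) (hα1 : 1 < α) (hα2 : α < 2) :
    ∫ x in Set.Ioi (0:ℝ), x ^ (2 - α) / (1 + x ^ 2) = -π / (2 * Real.cos (π * α / 2)) := by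
  set s : ℝ := (3 - α) / 2 with hs
  have hs0 : 0 < s := by rw [hs]; linarith
  have hs1 : s < 1 := by rw [hs]; linarith
  have himg : (fun x : ℝ => x ^ 2) '' Set.Ioi 0 = Set.Ioi 0 := by
    ext y
    constructor
    · rintro ⟨x, hx, rfl⟩
      simp only [Set.mem_Ioi] at hx ⊢
      positivity
    · intro hy
      simp only [Set.mem_Ioi] at hy
      exact ⟨Real.sqrt y, by simp only [Set.mem_Ioi]; positivity, Real.sq_sqrt hy.le⟩
  have h := integral_image_eq_integral_abs_deriv_smul (f := fun x : ℝ => x ^ 2)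
    (f' := fun x : ℝ => 2 * x) (measurableSet_Ioi (a := (0:ℝ)))
    (fun x _ => by simpa using (hasDerivAt_pow 2 x).hasDerivWithinAt)
    (fun a ha b hb hab => by
      simp only [Set.mem_Ioi] at ha hb
      simp only at hab
      nlinarith)
    (fun y => y ^ (s - 1) / (1 + y))
  rw [himg, l_val s hs0 hs1] at h
  have hcong : ∫ x in Set.Ioi (0:ℝ), |2 * x| • ((x ^ 2) ^ (s - 1) / (1 + x ^ 2)) =
      ∫ x in Set.Ioi (0:ℝ), 2 * (x ^ (2 - α) / (1 + x ^ 2)) := by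
    apply setIntegral_congr_fun measurableSet_Ioi
    intro x hx
    simp only [Set.mem_Ioi] at hx
    have e1 : ((x ^ 2 : ℝ)) ^ (s - 1) = x ^ (2 * (s - 1)) := by
      rw [← Real.rpow_natCast x 2, ← Real.rpow_mul hx.le]
      norm_num
    have e2 : 2 * (s - 1) = 1 - α := by rw [hs]; ring
    have e3 : x ^ (2 - α) = x * x ^ (1 - α) := by
      rw [show (2:ℝ) - α = 1 + (1 - α) by ring, Real.rpow_add hx, Real.rpow_one]
    simp only [smul_eq_mul]
    rw [e1, e2, abs_of_pos (by positivity : (0:ℝ) < 2 * x), e3]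
    ring
  rw [hcong, integral_const_mul] at h
  have hsin : Real.sin (π * s) = -Real.cos (π * α / 2) := by
    rw [show π * s = (π / 2 - π * α / 2) + π by rw [hs]; ring,
      Real.sin_antiperiodic (π / 2 - π * α / 2), Real.sin_pi_div_two_sub]
  have hcos : Real.cos (π * α / 2) ≠ 0 := by
    rw [← neg_ne_zero, ← hsin]
    exact ne_of_gt (Real.sin_pos_of_pos_of_lt_pi (by positivity)
      (by nlinarith [Real.pi_pos]))
  rw [hsin] at h
  have h2 : (∫ x in Set.Ioi (0:ℝ), x ^ (2 - α) / (1 + x ^ 2)) =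
      π / -Real.cos (π * α / 2) / 2 := by linarith
  rw [h2]
  field_simp


lemma l_cont (p : ℝ) : ContinuousOn (fun x : ℝ => x ^ p / (1 + x ^ 2)) {x : ℝ | x ≠ 0} := by
  apply ContinuousOn.div
  · exact fun x hx => (Real.continuousAt_rpow_const x p (Or.inl hx)).continuousWithinAt
  · fun_prop
  · intro x _; positivity

lemma l_int_tail (p τ : ℝ) (hp : p < -1) (hτ : 0 < τ) :
    IntegrableOn (fun x : ℝ => x ^ p / (1 + x ^ 2)) (Set.Ioi τ) := by
  apply MeasureTheory.Integrable.mono (integrableOn_Ioi_rpow_of_lt hp hτ)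
  · exact ((l_cont p).mono (fun x hx => ne_of_gt (hτ.trans hx))).aestronglyMeasurable
      measurableSet_Ioi
  · rw [ae_restrict_iff' measurableSet_Ioi]
    filter_upwards with x hx
    simp only [Set.mem_Ioi] at hx
    have hx0 : 0 < x := hτ.trans hx
    have h1 : (0:ℝ) < x ^ p := Real.rpow_pos_of_pos hx0 p
    rw [Real.norm_eq_abs, Real.norm_eq_abs, abs_of_pos h1, abs_of_pos (by positivity)]
    exact div_le_self h1.le (by nlinarith)

lemma l_int_tail2 (α τ : ℝ) (hα1 : 1 < α) (hα2 : α < 2) (hτ : 0 < τ) :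
    IntegrableOn (fun x : ℝ => x ^ (2 - α) / (1 + x ^ 2)) (Set.Ioi τ) := by
  apply MeasureTheory.Integrable.mono (integrableOn_Ioi_rpow_of_lt (show -α < -1 by linarith) hτ)
  · exact ((l_cont (2 - α)).mono (fun x hx => ne_of_gt (hτ.trans hx))).aestronglyMeasurable
      measurableSet_Ioi
  · rw [ae_restrict_iff' measurableSet_Ioi]
    filter_upwards with x hx
    simp only [Set.mem_Ioi] at hx
    have hx0 : 0 < x := hτ.trans hx
    have e : x ^ (2 - α) = x ^ 2 * x ^ (-α) := by
      rw [show (2:ℝ) - α = 2 + (-α) by ring, Real.rpow_add hx0, Real.rpow_two]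
    have h1 : (0:ℝ) < x ^ (-α) := Real.rpow_pos_of_pos hx0 _
    rw [Real.norm_eq_abs, Real.norm_eq_abs, abs_of_pos h1, abs_of_pos (by
      have := Real.rpow_pos_of_pos hx0 (2 - α); positivity)]
    rw [e, div_le_iff₀ (by positivity)]
    nlinarith

lemma l_int_head (α τ : ℝ) (hα1 : 1 < α) (hα2 : α < 2) (hτ : 0 < τ) :
    IntegrableOn (fun x : ℝ => x ^ (2 - α) / (1 + x ^ 2)) (Set.Ioc 0 τ) := by
  have hc : IntegrableOn (fun _ : ℝ => τ ^ (2 - α)) (Set.Ioc 0 τ) :=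
    integrableOn_const measure_Ioc_lt_top.ne
  apply MeasureTheory.Integrable.mono hc
  · exact ((l_cont (2 - α)).mono (fun x hx => ne_of_gt hx.1)).aestronglyMeasurable
      measurableSet_Ioc
  · rw [ae_restrict_iff' measurableSet_Ioc]
    filter_upwards with x hx
    have hx0 : 0 < x := hx.1
    have h1 : (0:ℝ) < x ^ (2 - α) := Real.rpow_pos_of_pos hx0 _
    have h2 : x ^ (2 - α) ≤ τ ^ (2 - α) :=
      Real.rpow_le_rpow hx0.le hx.2 (by linarith)
    rw [Real.norm_eq_abs, Real.norm_eq_abs, abs_of_pos (by positivity),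
      abs_of_pos (by positivity : (0:ℝ) < τ ^ (2 - α))]
    calc x ^ (2 - α) / (1 + x ^ 2) ≤ x ^ (2 - α) := div_le_self h1.le (by nlinarith)
      _ ≤ τ ^ (2 - α) := h2

theorem stmt2 (α τ : ℝ) (hα1 : 1 < α) (hα2 : α < 2) (hτ : 0 < τ) :
    (∫ x in Set.Ioc (0 : ℝ) τ, x ^ (2 - α) / (1 + x ^ 2)) -
        ∫ x in Set.Ioi τ, x ^ (-α) / (1 + x ^ 2) =
      -π / (2 * Real.cos (π * α / 2)) - τ ^ (1 - α) / (α - 1) := by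
  have hsplit : (∫ x in Set.Ioi (0:ℝ), x ^ (2 - α) / (1 + x ^ 2)) =
      (∫ x in Set.Ioc (0:ℝ) τ, x ^ (2 - α) / (1 + x ^ 2)) +
        ∫ x in Set.Ioi τ, x ^ (2 - α) / (1 + x ^ 2) := by
    rw [← setIntegral_union (Set.Ioc_disjoint_Ioi le_rfl) measurableSet_Ioi
      (l_int_head α τ hα1 hα2 hτ) (l_int_tail2 α τ hα1 hα2 hτ),
      Set.Ioc_union_Ioi_eq_Ioi hτ.le]
  have hsub : (∫ x in Set.Ioi τ, x ^ (2 - α) / (1 + x ^ 2)) =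
      (∫ x in Set.Ioi τ, x ^ (-α)) - ∫ x in Set.Ioi τ, x ^ (-α) / (1 + x ^ 2) := by
    rw [← integral_sub (integrableOn_Ioi_rpow_of_lt (show -α < -1 by linarith) hτ)
      (l_int_tail (-α) τ (by linarith) hτ)]
    apply setIntegral_congr_fun measurableSet_Ioi
    intro x hx
    simp only [Set.mem_Ioi] at hx
    have hx0 : 0 < x := hτ.trans hx
    have e : x ^ (2 - α) = x ^ 2 * x ^ (-α) := by
      rw [show (2:ℝ) - α = 2 + (-α) by ring, Real.rpow_add hx0, Real.rpow_two]
    have h1 : (1:ℝ) + x ^ 2 ≠ 0 := by positivity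
    simp only
    rw [e]
    field_simp
    ring
  have hv : (∫ x in Set.Ioi τ, x ^ (-α)) = τ ^ (1 - α) / (α - 1) := by
    rw [integral_Ioi_rpow_of_lt (by linarith) hτ, show -α + 1 = 1 - α by ring]
    have h1 : α - 1 ≠ 0 := by linarith
    have h2 : (1:ℝ) - α ≠ 0 := by linarith
    field_simp
    ring
  have hk := l_key α hα1 hα2
  rw [hsplit, hsub, hv] at hk
  linarith
end

section
/- Let α ∈ (1,2). For every t ∈ ℝ, t ≠ 0, the integral ∫₀^∞ (e^{itx} - 1 - itx) x^{-α-1} dx converges and equals (Γ(2-α)/(α(α-1))) |t|^α (cos(πα/2) - i sin(πα/2) sign(t)). -/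
open MeasureTheory Real Complex

noncomputable section

namespace Stmt17Aux

open Set Filter Topology

variable {α : ℝ}

/-- The integrand as a function of the complex parameter `a`. -/
def sf (α : ℝ) (a : ℂ) (x : ℝ) : ℂ :=
  (Complex.exp (-(a * x)) - 1 + a * x) * ((x ^ (-α - 1) : ℝ) : ℂ)

/-- Its derivative in `a`. -/
def sf' (α : ℝ) (a : ℂ) (x : ℝ) : ℂ :=
  (1 - Complex.exp (-(a * x))) * ((x ^ (-α) : ℝ) : ℂ)

/-- Second derivative in `a`. -/
def sK (α : ℝ) (a : ℂ) (x : ℝ) : ℂ :=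
  Complex.exp (-(a * x)) * ((x ^ (1 - α) : ℝ) : ℂ)

def sPhi (α : ℝ) (a : ℂ) : ℂ := ∫ x in Set.Ioi (0 : ℝ), sf α a x

def sH (α : ℝ) (a : ℂ) : ℂ := ∫ x in Set.Ioi (0 : ℝ), sf' α a x

lemma norm_ofReal_rpow {x : ℝ} (hx : 0 < x) (p : ℝ) : ‖((x ^ p : ℝ) : ℂ)‖ = x ^ p := by
  rw [Complex.norm_real, Real.norm_eq_abs, _root_.abs_of_nonneg (Real.rpow_nonneg hx.le p)]

lemma re_mul_ofReal (a : ℂ) (x : ℝ) : (a * (x : ℂ)).re = a.re * x := by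
  simp [Complex.mul_re]

lemma norm_neg_mul_ofReal (a : ℂ) {x : ℝ} (hx : 0 < x) : ‖-(a * (x : ℂ))‖ = ‖a‖ * x := by
  rw [norm_neg, norm_mul, Complex.norm_real, Real.norm_eq_abs, abs_of_pos hx]

lemma exp_bound_quad {z : ℂ} (h : ‖z‖ ≤ 1) : ‖Complex.exp z - 1 - z‖ ≤ ‖z‖ ^ 2 := by
  simpa using Complex.norm_exp_sub_one_sub_id_le (by simpa using h)

lemma exp_bound_lin {z : ℂ} (h : z.re ≤ 0) : ‖Complex.exp z - 1 - z‖ ≤ 2 + ‖z‖ := by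
  have h1 : ‖Complex.exp z‖ ≤ 1 := by
    rw [Complex.norm_exp]
    exact Real.exp_le_one_iff.2 h
  calc ‖Complex.exp z - 1 - z‖ ≤ ‖Complex.exp z - 1‖ + ‖z‖ := norm_sub_le _ _
    _ ≤ (‖Complex.exp z‖ + ‖(1 : ℂ)‖) + ‖z‖ := by gcongr; exact norm_sub_le _ _
    _ ≤ 2 + ‖z‖ := by rw [norm_one]; linarith

lemma one_sub_exp_le {z : ℂ} (h : z.re ≤ 0) : ‖1 - Complex.exp z‖ ≤ 2 := by
  have h1 : ‖Complex.exp z‖ ≤ 1 := by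
    rw [Complex.norm_exp]
    exact Real.exp_le_one_iff.2 h
  calc ‖1 - Complex.exp z‖ ≤ ‖(1 : ℂ)‖ + ‖Complex.exp z‖ := norm_sub_le _ _
    _ ≤ 2 := by rw [norm_one]; linarith

lemma one_sub_exp_le' {z : ℂ} (h : z.re ≤ 0) : ‖1 - Complex.exp z‖ ≤ 2 * ‖z‖ := by
  rcases le_or_gt ‖z‖ 1 with h1 | h1
  · rw [norm_sub_rev]
    simpa using
      Complex.norm_exp_sub_one_le (x := z) (by simpa using h1)
  · calc ‖1 - Complex.exp z‖ ≤ 2 := one_sub_exp_le h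
      _ ≤ 2 * ‖z‖ := by nlinarith

/-- Dominating function for `sf`. -/
def sB (α R : ℝ) (x : ℝ) : ℝ :=
  if x ≤ (R + 1)⁻¹ then (R + 1) ^ 2 * x ^ (1 - α) else 2 * x ^ (-α - 1) + (R + 1) * x ^ (-α)

/-- Dominating function for `sf'`. -/
def sB' (α R : ℝ) (x : ℝ) : ℝ :=
  if x ≤ 1 then 2 * R * x ^ (1 - α) else 2 * x ^ (-α)

lemma integrableOn_rpow_Ioc (hα2 : α < 2) {δ : ℝ} :
    IntegrableOn (fun x : ℝ => x ^ (1 - α)) (Set.Ioc 0 δ) := by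
  have := (intervalIntegral.intervalIntegrable_rpow' (a := 0) (b := δ)
    (r := 1 - α) (by linarith)).1
  simpa [IntegrableOn] using this

lemma sB_integrable (hα1 : 1 < α) (hα2 : α < 2) {R : ℝ} (hR : 0 ≤ R) :
    IntegrableOn (sB α R) (Set.Ioi 0) := by
  have hδ : (0 : ℝ) < (R + 1)⁻¹ := by positivity
  rw [← Set.Ioc_union_Ioi_eq_Ioi hδ.le]
  apply IntegrableOn.union
  · refine IntegrableOn.congr_fun
      ((integrableOn_rpow_Ioc hα2).const_mul ((R + 1) ^ 2)) ?_ measurableSet_Ioc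
    intro x hx
    simp [sB, if_pos hx.2]
  · have h1 : IntegrableOn (fun x : ℝ => 2 * x ^ (-α - 1) + (R + 1) * x ^ (-α)) (Set.Ioi (R+1)⁻¹) := by
      exact ((integrableOn_Ioi_rpow_of_lt (by linarith) hδ).const_mul 2).add
        ((integrableOn_Ioi_rpow_of_lt (by linarith) hδ).const_mul (R + 1))
    refine IntegrableOn.congr_fun h1 ?_ measurableSet_Ioi
    intro x hx
    simp [sB, if_neg (not_le.2 (Set.mem_Ioi.1 hx))]

lemma sB'_integrable (hα1 : 1 < α) (hα2 : α < 2) (R : ℝ) :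
    IntegrableOn (sB' α R) (Set.Ioi 0) := by
  rw [← Set.Ioc_union_Ioi_eq_Ioi (zero_le_one (α := ℝ))]
  apply IntegrableOn.union
  · refine IntegrableOn.congr_fun
      ((integrableOn_rpow_Ioc hα2).const_mul (2 * R)) ?_ measurableSet_Ioc
    intro x hx
    simp [sB', if_pos hx.2]
  · refine IntegrableOn.congr_fun
      ((integrableOn_Ioi_rpow_of_lt (show -α < -1 by linarith) one_pos).const_mul 2)
      ?_ measurableSet_Ioi
    intro x hx
    simp [sB', if_neg (not_le.2 (Set.mem_Ioi.1 hx))]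

lemma rpow_split1 {x : ℝ} (hx : 0 < x) : x ^ (1 - α) = x ^ 2 * x ^ (-α - 1) := by
  have h := Real.rpow_add hx 2 (-α - 1)
  calc x ^ (1 - α) = x ^ ((2 : ℝ) + (-α - 1)) := by ring_nf
    _ = x ^ (2:ℝ) * x ^ (-α - 1) := h
    _ = x ^ 2 * x ^ (-α - 1) := by norm_num [show ((2:ℝ)) = ((2:ℕ):ℝ) by norm_num,
        Real.rpow_natCast]

lemma rpow_split2 {x : ℝ} (hx : 0 < x) : x ^ (-α) = x * x ^ (-α - 1) := by
  have h := Real.rpow_add hx 1 (-α - 1)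
  calc x ^ (-α) = x ^ ((1 : ℝ) + (-α - 1)) := by ring_nf
    _ = x ^ (1:ℝ) * x ^ (-α - 1) := h
    _ = x * x ^ (-α - 1) := by rw [Real.rpow_one]

lemma rpow_split3 {x : ℝ} (hx : 0 < x) : x ^ (1 - α) = x * x ^ (-α) := by
  have h := Real.rpow_add hx 1 (-α)
  calc x ^ (1 - α) = x ^ ((1 : ℝ) + (-α)) := by ring_nf
    _ = x ^ (1:ℝ) * x ^ (-α) := h
    _ = x * x ^ (-α) := by rw [Real.rpow_one]

lemma sf_norm_le {a : ℂ} {R x : ℝ} (ha : 0 ≤ a.re) (haR : ‖a‖ ≤ R) (hx : 0 < x) :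
    ‖sf α a x‖ ≤ sB α R x := by
  have hR : 0 ≤ R := le_trans (norm_nonneg a) haR
  have hzre : (-(a * (x : ℂ))).re ≤ 0 := by
    rw [Complex.neg_re, re_mul_ofReal]
    nlinarith
  have hzn : ‖-(a * (x : ℂ))‖ = ‖a‖ * x := norm_neg_mul_ofReal a hx
  have hterm : Complex.exp (-(a * x)) - 1 + a * x
      = Complex.exp (-(a * (x:ℂ))) - 1 - (-(a * (x:ℂ))) := by ring
  rw [sf, hterm, norm_mul, norm_ofReal_rpow hx]
  have hxp : (0:ℝ) ≤ x ^ (-α - 1) := Real.rpow_nonneg hx.le _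
  unfold sB
  split_ifs with h
  · have h1 : ‖-(a * (x : ℂ))‖ ≤ 1 := by
      rw [hzn]
      calc ‖a‖ * x ≤ R * (R + 1)⁻¹ := by
            apply mul_le_mul haR h hx.le hR
        _ ≤ 1 := by
            rw [← le_div_iff₀ (by positivity)] at *
            rw [one_div, inv_inv]; linarith
    calc ‖Complex.exp (-(a * (x:ℂ))) - 1 - (-(a * (x:ℂ)))‖ * x ^ (-α - 1)
        ≤ ‖-(a * (x : ℂ))‖ ^ 2 * x ^ (-α - 1) := by
          gcongr; exact exp_bound_quad h1
      _ = (‖a‖ * x) ^ 2 * x ^ (-α - 1) := by rw [hzn]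
      _ ≤ (R + 1) ^ 2 * (x ^ 2 * x ^ (-α - 1)) := by
          rw [← mul_assoc, mul_pow]
          gcongr
          linarith
      _ = (R + 1) ^ 2 * x ^ (1 - α) := by rw [← rpow_split1 hx]
  · calc ‖Complex.exp (-(a * (x:ℂ))) - 1 - (-(a * (x:ℂ)))‖ * x ^ (-α - 1)
        ≤ (2 + ‖a‖ * x) * x ^ (-α - 1) := by
          gcongr
          simpa [hzn] using exp_bound_lin hzre
      _ = 2 * x ^ (-α - 1) + ‖a‖ * (x * x ^ (-α - 1)) := by ring
      _ ≤ 2 * x ^ (-α - 1) + (R + 1) * x ^ (-α) := by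
          rw [← rpow_split2 hx]
          have : (0:ℝ) ≤ x ^ (-α) := Real.rpow_nonneg hx.le _
          nlinarith
      _ = _ := rfl

lemma sf'_norm_le {a : ℂ} {R x : ℝ} (ha : 0 ≤ a.re) (haR : ‖a‖ ≤ R) (hx : 0 < x) :
    ‖sf' α a x‖ ≤ sB' α R x := by
  have hzre : (-(a * (x : ℂ))).re ≤ 0 := by
    rw [Complex.neg_re, re_mul_ofReal]
    nlinarith
  have hzn : ‖-(a * (x : ℂ))‖ = ‖a‖ * x := norm_neg_mul_ofReal a hx
  rw [sf', norm_mul, norm_ofReal_rpow hx]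
  have hxp : (0:ℝ) ≤ x ^ (-α) := Real.rpow_nonneg hx.le _
  unfold sB'
  split_ifs with h
  · calc ‖1 - Complex.exp (-(a * (x:ℂ)))‖ * x ^ (-α)
        ≤ 2 * (‖a‖ * x) * x ^ (-α) := by
          gcongr
          simpa [hzn] using one_sub_exp_le' hzre
      _ = 2 * ‖a‖ * (x * x ^ (-α)) := by ring
      _ = 2 * ‖a‖ * x ^ (1 - α) := by rw [← rpow_split3 hx]
      _ ≤ 2 * R * x ^ (1 - α) := by
          have : (0:ℝ) ≤ x ^ (1 - α) := Real.rpow_nonneg hx.le _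
          nlinarith
  · gcongr
    exact one_sub_exp_le hzre

lemma contOn_rpow (p : ℝ) : ContinuousOn (fun x : ℝ => ((x ^ p : ℝ) : ℂ)) (Set.Ioi 0) := by
  apply Complex.continuous_ofReal.comp_continuousOn
  intro x hx
  exact (Real.continuousAt_rpow_const x p (Or.inl (ne_of_gt hx))).continuousWithinAt

lemma sf_meas (α : ℝ) (a : ℂ) :
    AEStronglyMeasurable (sf α a) (volume.restrict (Set.Ioi 0)) := by
  apply ContinuousOn.aestronglyMeasurable _ measurableSet_Ioi
  apply ContinuousOn.mul _ (contOn_rpow _)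
  refine Continuous.continuousOn ?_
  continuity

lemma sf'_meas (α : ℝ) (a : ℂ) :
    AEStronglyMeasurable (sf' α a) (volume.restrict (Set.Ioi 0)) := by
  apply ContinuousOn.aestronglyMeasurable _ measurableSet_Ioi
  apply ContinuousOn.mul _ (contOn_rpow _)
  refine Continuous.continuousOn ?_
  continuity

lemma sK_meas (α : ℝ) (a : ℂ) :
    AEStronglyMeasurable (sK α a) (volume.restrict (Set.Ioi 0)) := by
  apply ContinuousOn.aestronglyMeasurable _ measurableSet_Ioi
  apply ContinuousOn.mul _ (contOn_rpow _)
  refine Continuous.continuousOn ?_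
  continuity

lemma sf_integrable (hα1 : 1 < α) (hα2 : α < 2) {a : ℂ} (ha : 0 ≤ a.re) :
    IntegrableOn (sf α a) (Set.Ioi 0) := by
  apply Integrable.mono' (sB_integrable hα1 hα2 (norm_nonneg a)) (sf_meas α a)
  rw [ae_restrict_iff' measurableSet_Ioi]
  filter_upwards with x hx
  exact sf_norm_le ha le_rfl hx

lemma sf_hasDeriv {x : ℝ} (hx : 0 < x) (α : ℝ) (a : ℂ) :
    HasDerivAt (fun b => sf α b x) (sf' α a x) a := by
  have h0 : HasDerivAt (fun b : ℂ => -(b * (x:ℂ))) (-(x:ℂ)) a := by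
    have := ((hasDerivAt_id a).mul_const (x:ℂ)).neg; simp only [id, one_mul] at this; exact this
  have h1 := h0.cexp
  have h2 := ((h1.sub_const 1).add ((hasDerivAt_id a).mul_const (x:ℂ))).mul_const
    ((x ^ (-α - 1) : ℝ) : ℂ)
  refine h2.congr_deriv ?_
  have hxx : ((x:ℝ) ^ (-α) : ℝ) = x * x ^ (-α - 1) := rpow_split2 hx
  rw [sf', hxx]
  push_cast
  ring

lemma sf'_hasDeriv {x : ℝ} (hx : 0 < x) (α : ℝ) (a : ℂ) :
    HasDerivAt (fun b => sf' α b x) (sK α a x) a := by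
  have h0 : HasDerivAt (fun b : ℂ => -(b * (x:ℂ))) (-(x:ℂ)) a := by
    have := ((hasDerivAt_id a).mul_const (x:ℂ)).neg; simp only [id, one_mul] at this; exact this
  have h1 := ((h0.cexp).const_sub 1).mul_const ((x ^ (-α) : ℝ) : ℂ)
  refine h1.congr_deriv ?_
  have hxx : ((x:ℝ) ^ (1 - α) : ℝ) = x * x ^ (-α) := rpow_split3 hx
  rw [sK, hxx]
  push_cast
  ring

lemma ball_facts {a b : ℂ} {ε : ℝ} (hb : b ∈ Metric.ball a ε) :
    ‖b‖ ≤ ‖a‖ + ε ∧ a.re - ε ≤ b.re := by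
  rw [Metric.mem_ball, dist_eq_norm] at hb
  constructor
  · calc ‖b‖ = ‖a + (b - a)‖ := by ring_nf
      _ ≤ ‖a‖ + ‖b - a‖ := norm_add_le _ _
      _ ≤ ‖a‖ + ε := by linarith
  · have := Complex.abs_re_le_norm (b - a)
    have h2 : |b.re - a.re| ≤ ‖b - a‖ := by simpa using this
    have := abs_le.1 h2
    linarith

lemma phi_hasDeriv (hα1 : 1 < α) (hα2 : α < 2) {a : ℂ} (ha : 0 < a.re) :
    HasDerivAt (sPhi α) (sH α a) a := by
  set ε : ℝ := min (a.re / 2) 1 with hεdef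
  have hε : 0 < ε := lt_min (by linarith) one_pos
  have key := hasDerivAt_integral_of_dominated_loc_of_deriv_le (μ := volume.restrict (Set.Ioi 0))
    (F := fun b (x : ℝ) => sf α b x) (F' := fun b (x : ℝ) => sf' α b x)
    (bound := sB' α (‖a‖ + 1)) (x₀ := a) (Metric.ball_mem_nhds a hε)
    (Filter.Eventually.of_forall fun b => sf_meas α b)
    (sf_integrable hα1 hα2 ha.le)
    (sf'_meas α a)
    ?_ (sB'_integrable hα1 hα2 _) ?_
  · exact key.2
  · rw [ae_restrict_iff' measurableSet_Ioi]
    filter_upwards with x hx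
    intro b hb
    obtain ⟨h1, h2⟩ := ball_facts hb
    have hbre : 0 ≤ b.re := by
      have : ε ≤ a.re / 2 := min_le_left _ _
      linarith
    have hbn : ‖b‖ ≤ ‖a‖ + 1 := le_trans h1 (by have : ε ≤ 1 := min_le_right _ _; linarith)
    exact sf'_norm_le hbre hbn hx
  · rw [ae_restrict_iff' measurableSet_Ioi]
    filter_upwards with x hx
    intro b _
    exact sf_hasDeriv hx α b

lemma bndK_integrable (hα1 : 1 < α) (hα2 : α < 2) {σ : ℝ} (hσ : 0 < σ) :
    IntegrableOn (fun x : ℝ => Real.exp (-(σ * x)) * x ^ (1 - α)) (Set.Ioi 0) := by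
  have h0 : IntegrableOn (fun x : ℝ => Real.exp (-x) * x ^ ((2 - α) - 1)) (Set.Ioi 0) :=
    Real.GammaIntegral_convergent (by linarith)
  have h1 : IntegrableOn (fun x : ℝ => Real.exp (-(σ * x)) * (σ * x) ^ (1 - α)) (Set.Ioi 0) := by
    have := (integrableOn_Ioi_comp_mul_left_iff
      (fun x : ℝ => Real.exp (-x) * x ^ (1 - α)) 0 hσ).2 (by
        rw [mul_zero]
        convert h0 using 2
        ring_nf)
    simpa using this
  refine IntegrableOn.congr_fun (h1.const_mul (σ ^ (α - 1))) ?_ measurableSet_Ioi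
  intro x hx
  simp only [Set.mem_Ioi] at hx
  show σ ^ (α - 1) * (Real.exp (-(σ * x)) * (σ * x) ^ (1 - α))
      = Real.exp (-(σ * x)) * x ^ (1 - α)
  rw [Real.mul_rpow hσ.le hx.le]
  rw [show σ ^ (α-1) * (Real.exp (-(σ * x)) * (σ ^ (1-α) * x ^ (1-α)))
    = (σ ^ (α-1) * σ ^ (1-α)) * (Real.exp (-(σ * x)) * x ^ (1-α)) by ring,
    ← Real.rpow_add hσ]
  norm_num

lemma sK_norm_le {a : ℂ} {σ x : ℝ} (ha : σ ≤ a.re) (hx : 0 < x) :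
    ‖sK α a x‖ ≤ Real.exp (-(σ * x)) * x ^ (1 - α) := by
  rw [sK, norm_mul, norm_ofReal_rpow hx]
  gcongr
  rw [Complex.norm_exp]
  apply Real.exp_le_exp.2
  rw [Complex.neg_re, re_mul_ofReal]
  nlinarith

lemma H_hasDeriv (hα1 : 1 < α) (hα2 : α < 2) {a : ℂ} (ha : 0 < a.re) :
    HasDerivAt (sH α) (∫ x in Set.Ioi (0:ℝ), sK α a x) a := by
  have hε : (0:ℝ) < a.re / 2 := by linarith
  have key := hasDerivAt_integral_of_dominated_loc_of_deriv_le (μ := volume.restrict (Set.Ioi 0))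
    (F := fun b (x : ℝ) => sf' α b x) (F' := fun b (x : ℝ) => sK α b x)
    (bound := fun x => Real.exp (-(a.re / 2 * x)) * x ^ (1 - α)) (x₀ := a) (Metric.ball_mem_nhds a hε)
    (Filter.Eventually.of_forall fun b => sf'_meas α b)
    ?_ (sK_meas α a) ?_ (bndK_integrable hα1 hα2 hε) ?_
  · exact key.2
  · -- integrability of sf' a
    apply Integrable.mono' (sB'_integrable hα1 hα2 ‖a‖) (sf'_meas α a)
    rw [ae_restrict_iff' measurableSet_Ioi]
    filter_upwards with x hx
    exact sf'_norm_le ha.le le_rfl hx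
  · rw [ae_restrict_iff' measurableSet_Ioi]
    filter_upwards with x hx
    intro b hb
    obtain ⟨_, h2⟩ := ball_facts hb
    exact sK_norm_le (by linarith) hx
  · rw [ae_restrict_iff' measurableSet_Ioi]
    filter_upwards with x hx
    intro b _
    exact sf'_hasDeriv hx α b

lemma K_real (hα1 : 1 < α) (hα2 : α < 2) {r : ℝ} (hr : 0 < r) :
    ∫ x in Set.Ioi (0:ℝ), sK α (r : ℂ) x
      = (1 / (r:ℂ)) ^ ((2:ℂ) - α) * Complex.Gamma ((2:ℂ) - α) := by
  rw [← Complex.integral_cpow_mul_exp_neg_mul_Ioi (a := (2:ℂ) - α)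
    (by simpa using by linarith : 0 < ((2:ℂ) - α).re) hr]
  apply setIntegral_congr_fun measurableSet_Ioi
  intro x hx
  simp only [Set.mem_Ioi] at hx
  rw [sK, Complex.ofReal_cpow hx.le]
  rw [show ((1 - α : ℝ) : ℂ) = (2:ℂ) - α - 1 by push_cast; ring]
  rw [mul_comm]

lemma phi_real_scaling (hα1 : 1 < α) (hα2 : α < 2) {r : ℝ} (hr : 0 < r) :
    sPhi α (r : ℂ) = ((r ^ α : ℝ) : ℂ) * sPhi α 1 := by
  have key : ∀ x ∈ Set.Ioi (0:ℝ), sf α (r:ℂ) x = ((r ^ (α+1) : ℝ) : ℂ) * sf α 1 (r * x) := by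
    intro x hx
    simp only [Set.mem_Ioi] at hx
    have h2 : ((x ^ (-α-1):ℝ):ℂ) = ((r ^ (α+1) : ℝ):ℂ) * (((r*x) ^ (-α-1) : ℝ):ℂ) := by
      rw [← Complex.ofReal_mul]
      congr 1
      rw [Real.mul_rpow hr.le hx.le, ← mul_assoc, ← Real.rpow_add hr]
      norm_num
    rw [sf, sf, h2]
    push_cast
    simp only [one_mul]
    ring
  rw [sPhi, setIntegral_congr_fun measurableSet_Ioi key, integral_const_mul,
    integral_comp_mul_left_Ioi (g := sf α 1) 0 hr, mul_zero]
  rw [← sPhi, Complex.real_smul, ← mul_assoc, ← Complex.ofReal_mul]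
  congr 2
  rw [Real.rpow_add_one hr.ne']
  field_simp

lemma phi_one (hα1 : 1 < α) (hα2 : α < 2) :
    sPhi α 1 = ((Real.Gamma (2 - α) / (α * (α - 1)) : ℝ) : ℂ) := by
  have hre : ∀ r : ℝ, 0 < r → 0 < ((r : ℂ)).re := fun r hr => by simpa using hr
  set c₁ : ℂ := sPhi α 1 with hc₁
  -- first derivative identity on positive reals
  have hH : ∀ r : ℝ, 0 < r → sH α (r:ℂ) = ((α * r ^ (α - 1) : ℝ) : ℂ) * c₁ := by
    intro r hr
    have hD1 : HasDerivAt (fun s : ℝ => sPhi α (s : ℂ)) (sH α (r:ℂ)) r :=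
      (phi_hasDeriv hα1 hα2 (hre r hr)).comp_ofReal
    have hEq : (fun s : ℝ => sPhi α (s : ℂ)) =ᶠ[𝓝 r] fun s => ((s ^ α : ℝ) : ℂ) * c₁ := by
      filter_upwards [Ioi_mem_nhds hr] with s hs
      exact phi_real_scaling hα1 hα2 hs
    have hD2 : HasDerivAt (fun s : ℝ => ((s ^ α : ℝ) : ℂ) * c₁)
        (((α * r ^ (α - 1) : ℝ) : ℂ) * c₁) r := by
      have := (Real.hasDerivAt_rpow_const (x := r) (p := α) (Or.inl hr.ne')).ofReal_comp
      exact this.mul_const c₁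
    have hD2' : HasDerivAt (fun s : ℝ => sPhi α (s : ℂ))
        (((α * r ^ (α - 1) : ℝ) : ℂ) * c₁) r := hD2.congr_of_eventuallyEq hEq
    exact hD1.unique hD2'
  -- second derivative identity at r = 1
  have hK : ∫ x in Set.Ioi (0:ℝ), sK α (1:ℂ) x
      = ((α * ((α - 1) * (1:ℝ) ^ (α - 1 - 1)) : ℝ) : ℂ) * c₁ := by
    have hD3 : HasDerivAt (fun s : ℝ => sH α (s : ℂ))
        (∫ x in Set.Ioi (0:ℝ), sK α ((1:ℝ):ℂ) x) 1 :=
      (H_hasDeriv hα1 hα2 (hre 1 one_pos)).comp_ofReal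
    have hEq : (fun s : ℝ => sH α (s : ℂ))
        =ᶠ[𝓝 (1:ℝ)] fun s => ((α * s ^ (α - 1) : ℝ) : ℂ) * c₁ := by
      filter_upwards [Ioi_mem_nhds one_pos] with s hs
      exact hH s hs
    have hD4 : HasDerivAt (fun s : ℝ => ((α * s ^ (α - 1) : ℝ) : ℂ) * c₁)
        (((α * ((α - 1) * (1:ℝ) ^ (α - 1 - 1)) : ℝ) : ℂ) * c₁) 1 := by
      have h5 : HasDerivAt (fun s : ℝ => α * s ^ (α - 1))
          (α * ((α - 1) * (1:ℝ) ^ (α - 1 - 1))) 1 :=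
        (Real.hasDerivAt_rpow_const (x := (1:ℝ)) (p := α - 1) (Or.inl one_ne_zero)).const_mul α
      exact (h5.ofReal_comp).mul_const c₁
    have hD4' := hD4.congr_of_eventuallyEq hEq
    have := hD3.unique hD4'
    simpa using this
  have hKval : ∫ x in Set.Ioi (0:ℝ), sK α (1:ℂ) x = ((Real.Gamma (2 - α) : ℝ) : ℂ) := by
    have := K_real hα1 hα2 (r := 1) one_pos
    simp only [Complex.ofReal_one, div_one, one_cpow] at this
    rw [this, one_mul]
    rw [show ((2:ℂ) - α) = ((2 - α : ℝ) : ℂ) by push_cast; ring, Complex.Gamma_ofReal]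
  rw [hKval] at hK
  simp only [Real.one_rpow, mul_one] at hK
  have hαα : (α * (α - 1) : ℝ) ≠ 0 := by
    have : (0:ℝ) < α * (α - 1) := by nlinarith
    exact this.ne'
  have : c₁ = ((Real.Gamma (2 - α) : ℝ) : ℂ) / ((α * (α - 1) : ℝ) : ℂ) := by
    rw [eq_div_iff (by exact_mod_cast hαα)]
    rw [hK]
    push_cast
    ring
  rw [this]
  push_cast
  ring

lemma phi_eq_on_halfplane (hα1 : 1 < α) (hα2 : α < 2) {a : ℂ} (ha : 0 < a.re) :
    sPhi α a = ((Real.Gamma (2 - α) / (α * (α - 1)) : ℝ) : ℂ) * a ^ (α : ℂ) := by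
  set c : ℝ := Real.Gamma (2 - α) / (α * (α - 1)) with hc
  set U : Set ℂ := {z : ℂ | 0 < z.re} with hU
  have hopen : IsOpen U := isOpen_lt continuous_const Complex.continuous_re
  have hΦdiff : DifferentiableOn ℂ (sPhi α) U := fun z hz =>
    ((phi_hasDeriv hα1 hα2 hz).differentiableAt).differentiableWithinAt
  have hΨdiff : DifferentiableOn ℂ (fun z => ((c : ℝ) : ℂ) * z ^ (α : ℂ)) U := by
    intro z hz
    have hd : HasDerivAt (fun z : ℂ => z ^ (α : ℂ)) ((α:ℂ) * z ^ ((α:ℂ) - 1)) z :=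
      (Complex.hasStrictDerivAt_cpow_const
        (Complex.mem_slitPlane_iff.2 (Or.inl hz))).hasDerivAt
    exact ((hd.const_mul _).differentiableAt).differentiableWithinAt
  have hconn : IsPreconnected U := (convex_halfSpace_re_gt 0).isPreconnected
  have h1U : (1 : ℂ) ∈ U := by simp [hU]
  have hmap : Tendsto (fun r : ℝ => (r : ℂ)) (𝓝[≠] (1:ℝ)) (𝓝[≠] (1:ℂ)) := by
    apply tendsto_nhdsWithin_of_tendsto_nhds_of_eventually_within
    · have : Tendsto (fun r : ℝ => (r : ℂ)) (𝓝 (1:ℝ)) (𝓝 ((1:ℝ):ℂ)) :=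
        Complex.continuous_ofReal.tendsto 1
      simpa using this.mono_left nhdsWithin_le_nhds
    · filter_upwards [self_mem_nhdsWithin] with r hr
      simpa using fun h => hr (by exact_mod_cast h)
  have hev : ∀ᶠ (r : ℝ) in 𝓝[≠] (1:ℝ), sPhi α (r:ℂ) = ((c : ℝ) : ℂ) * (r:ℂ) ^ (α : ℂ) := by
    filter_upwards [mem_nhdsWithin_of_mem_nhds (Ioi_mem_nhds (show (0:ℝ) < 1 from one_pos))] with r hr
    rw [phi_real_scaling hα1 hα2 hr, phi_one hα1 hα2, Complex.ofReal_cpow (le_of_lt hr)]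
    ring
  have hfreq : ∃ᶠ z in 𝓝[≠] (1:ℂ), sPhi α z = ((c : ℝ) : ℂ) * z ^ (α : ℂ) :=
    hmap.frequently hev.frequently
  have := (hΦdiff.analyticOnNhd hopen).eqOn_of_preconnected_of_frequently_eq
    (hΨdiff.analyticOnNhd hopen) hconn h1U hfreq
  exact this ha

lemma phi_boundary (hα1 : 1 < α) (hα2 : α < 2) {t : ℝ} (ht : t ≠ 0) :
    sPhi α (-(Complex.I * t))
      = ((Real.Gamma (2 - α) / (α * (α - 1)) : ℝ) : ℂ) * (-(Complex.I * t)) ^ (α : ℂ) := by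
  set c : ℝ := Real.Gamma (2 - α) / (α * (α - 1)) with hc
  set a₀ : ℂ := -(Complex.I * t) with ha₀
  have ha₀re : a₀.re = 0 := by simp [ha₀]
  have ha₀im : a₀.im = -t := by simp [ha₀]
  have ha₀n : ‖a₀‖ = |t| := by
    simp [ha₀, map_mul]
  have hconv : Tendsto (fun ε : ℝ => ((ε:ℂ) + a₀)) (𝓝[>] (0:ℝ)) (𝓝 a₀) := by
    have h1 : Tendsto (fun ε : ℝ => ((ε:ℂ) + a₀)) (𝓝 (0:ℝ)) (𝓝 (((0:ℝ):ℂ) + a₀)) :=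
      ((Complex.continuous_ofReal.tendsto 0).add tendsto_const_nhds)
    simpa using h1.mono_left nhdsWithin_le_nhds
  have T1 : Tendsto (fun ε : ℝ => sPhi α ((ε:ℂ) + a₀)) (𝓝[>] (0:ℝ)) (𝓝 (sPhi α a₀)) := by
    apply tendsto_integral_filter_of_dominated_convergence (bound := sB α (|t| + 1))
    · exact Filter.Eventually.of_forall fun ε => sf_meas α _
    · filter_upwards [Ioc_mem_nhdsGT (zero_lt_one (α := ℝ))] with ε hε
      rw [ae_restrict_iff' measurableSet_Ioi]
      filter_upwards with x hx
      apply sf_norm_le _ _ hx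
      · rw [Complex.add_re, ha₀re, Complex.ofReal_re]
        simpa using hε.1.le
      · calc ‖(ε:ℂ) + a₀‖ ≤ ‖(ε:ℂ)‖ + ‖a₀‖ := norm_add_le _ _
          _ ≤ 1 + |t| := by
            rw [ha₀n, Complex.norm_real, Real.norm_eq_abs, abs_of_pos hε.1]
            linarith [hε.2]
          _ = |t| + 1 := by ring
    · exact sB_integrable hα1 hα2 (by positivity)
    · rw [ae_restrict_iff' measurableSet_Ioi]
      filter_upwards with x hx
      have hcont : Continuous fun b : ℂ => sf α b x := by
        unfold sf
        continuity
      exact (hcont.tendsto a₀).comp hconv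
  have T2 : Tendsto (fun ε : ℝ => ((c:ℝ):ℂ) * ((ε:ℂ) + a₀) ^ (α : ℂ)) (𝓝[>] (0:ℝ))
      (𝓝 (((c:ℝ):ℂ) * a₀ ^ (α : ℂ))) := by
    have hca : ContinuousAt (fun z : ℂ => z ^ (α : ℂ)) a₀ :=
      continuousAt_cpow_const (Complex.mem_slitPlane_iff.2 (Or.inr (by
        rw [ha₀im]; simpa using ht)))
    exact tendsto_const_nhds.mul ((hca.tendsto).comp hconv)
  have hEq : (fun ε : ℝ => sPhi α ((ε:ℂ) + a₀))
      =ᶠ[𝓝[>] (0:ℝ)] fun ε => ((c:ℝ):ℂ) * ((ε:ℂ) + a₀) ^ (α : ℂ) := by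
    filter_upwards [self_mem_nhdsWithin] with ε hε
    apply phi_eq_on_halfplane hα1 hα2
    rw [Complex.add_re, ha₀re, Complex.ofReal_re]
    simpa using hε
  exact tendsto_nhds_unique (T1.congr' hEq) T2

lemma cpow_polar {r θ : ℝ} (hr : 0 < r) (h1 : -π < θ) (h2 : θ ≤ π) (p : ℝ) :
    ((r:ℂ) * Complex.exp ((θ:ℂ) * Complex.I)) ^ ((p:ℝ):ℂ)
      = ((r ^ p : ℝ) : ℂ) * Complex.exp (((p * θ : ℝ):ℂ) * Complex.I) := by
  have hz : (r:ℂ) * Complex.exp ((θ:ℂ) * Complex.I)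
      = Complex.exp (((Real.log r : ℝ):ℂ) + (θ:ℂ) * Complex.I) := by
    rw [Complex.exp_add, ← Complex.ofReal_exp, Real.exp_log hr]
  rw [hz, Complex.cpow_def_of_ne_zero (Complex.exp_ne_zero _), Complex.log_exp]
  · rw [show (((Real.log r : ℝ):ℂ) + (θ:ℂ) * Complex.I) * ((p:ℝ):ℂ)
      = ((Real.log r * p : ℝ):ℂ) + ((p * θ : ℝ):ℂ) * Complex.I by push_cast; ring]
    rw [Complex.exp_add, ← Complex.ofReal_exp, ← Real.rpow_def_of_pos hr]
  · simpa using h1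
  · simpa using h2

lemma final_arith (hα1 : 1 < α) (hα2 : α < 2) {t : ℝ} (ht : t ≠ 0) :
    ((Real.Gamma (2 - α) / (α * (α - 1)) : ℝ) : ℂ) * (-(Complex.I * t)) ^ (α : ℂ)
      = ((Real.Gamma (2 - α) / (α * (α - 1)) * |t| ^ α : ℝ) : ℂ) *
        ((Real.cos (π * α / 2) : ℝ) - Complex.I * (Real.sin (π * α / 2) : ℝ) * (Real.sign t : ℝ)) := by
  have hpi := Real.pi_pos
  rcases lt_or_gt_of_ne ht with htneg | htpos
  · -- t < 0
    have habs : |t| = -t := abs_of_neg htneg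
    have hsign : Real.sign t = -1 := Real.sign_of_neg htneg
    have hexp : Complex.exp (((π/2 : ℝ):ℂ) * Complex.I) = Complex.I := by
      rw [Complex.exp_mul_I, ← Complex.ofReal_cos, ← Complex.ofReal_sin,
        Real.cos_pi_div_two, Real.sin_pi_div_two]
      simp
    have hbase : -(Complex.I * t) = ((-t : ℝ):ℂ) * Complex.exp (((π/2 : ℝ):ℂ) * Complex.I) := by
      rw [hexp]
      push_cast
      ring
    rw [hbase, cpow_polar (by linarith) (by linarith) (by linarith) α]
    rw [Complex.exp_mul_I, ← Complex.ofReal_cos, ← Complex.ofReal_sin]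
    rw [habs, hsign]
    rw [show α * (π/2) = π * α / 2 by ring]
    push_cast
    ring
  · -- t > 0
    have habs : |t| = t := abs_of_pos htpos
    have hsign : Real.sign t = 1 := Real.sign_of_pos htpos
    have hexp : Complex.exp (((-(π/2) : ℝ):ℂ) * Complex.I) = -Complex.I := by
      rw [Complex.exp_mul_I, ← Complex.ofReal_cos, ← Complex.ofReal_sin,
        Real.cos_neg, Real.sin_neg, Real.cos_pi_div_two, Real.sin_pi_div_two]
      simp
    have hbase : -(Complex.I * t) = ((t : ℝ):ℂ) * Complex.exp (((-(π/2) : ℝ):ℂ) * Complex.I) := by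
      rw [hexp]
      push_cast
      ring
    rw [hbase, cpow_polar htpos (by linarith) (by linarith) α]
    rw [show α * -(π/2) = -(π * α / 2) by ring]
    rw [show ((-(π * α / 2) : ℝ):ℂ) = -((π * α / 2 : ℝ):ℂ) by push_cast; ring]
    rw [Complex.exp_mul_I]
    rw [Complex.cos_neg, Complex.sin_neg, ← Complex.ofReal_cos, ← Complex.ofReal_sin]
    rw [habs, hsign]
    push_cast
    ring

end Stmt17Aux

end

theorem stmt17 (α : ℝ) (hα1 : 1 < α) (hα2 : α < 2) (t : ℝ) (ht : t ≠ 0) :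
    IntegrableOn (fun x : ℝ =>
        (Complex.exp (Complex.I * t * x) - 1 - Complex.I * t * x) * (↑(x ^ (-α - 1)) : ℂ))
      (Set.Ioi 0) volume ∧
    ∫ x in Set.Ioi (0 : ℝ),
        (Complex.exp (Complex.I * t * x) - 1 - Complex.I * t * x) * (↑(x ^ (-α - 1)) : ℂ) =
      (↑(Real.Gamma (2 - α) / (α * (α - 1)) * |t| ^ α) : ℂ) *
        (Real.cos (π * α / 2) - Complex.I * Real.sin (π * α / 2) * Real.sign t) := by
  have hre : (0:ℝ) ≤ (-(Complex.I * t)).re := by simp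
  have hfun : (fun x : ℝ =>
      (Complex.exp (Complex.I * t * x) - 1 - Complex.I * t * x) * (↑(x ^ (-α - 1)) : ℂ))
      = Stmt17Aux.sf α (-(Complex.I * t)) := by
    funext x
    rw [Stmt17Aux.sf]
    rw [show -(-(Complex.I * (t:ℂ)) * (x:ℂ)) = Complex.I * t * x by ring]
    ring
  rw [hfun]
  refine ⟨Stmt17Aux.sf_integrable hα1 hα2 hre, ?_⟩
  have := Stmt17Aux.phi_boundary hα1 hα2 ht (α := α)
  rw [Stmt17Aux.sPhi] at this
  rw [this, Stmt17Aux.final_arith hα1 hα2 ht]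
end
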